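/- For any positive integer n, in the polynomial ring ℤ[q] the product [n+1]_q · lcm([n choose 0]_q, [n choose 1]_q, ..., [n choose n]_q) is equal (up to units, i.e. is associated) to lcm([1]_q, [2]_q, ..., [n+1]_q). -/

import Mathlib

open Polynomial

/-- The `q`-integer `[n]_q = 1 + q + ⋯ + q^{n-1}` as a polynomial in `ℤ[q]`. -/
noncomputable def qInt (n : ℕ) : Polynomial ℤ := ∑ i ∈ Finset.range n, X ^ i

/-- The `q`-factorial `[n]_q! = ∏_{k=1}^n [k]_q`. -/
noncomputable def qFact (n : ℕ) : Polynomial ℤ := ∏ k ∈ Finset.range n, qInt (k + 1)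

/-! ### Auxiliary lemmas -/

lemma qInt_eq_prod {m : ℕ} (hm : 0 < m) :
    qInt m = ∏ d ∈ (Finset.Icc 2 m).filter (· ∣ m), cyclotomic d ℤ := by
  rw [qInt, ← prod_cyclotomic_eq_geom_sum hm]
  apply Finset.prod_congr _ (fun _ _ => rfl)
  ext d
  simp only [Finset.mem_erase, Nat.mem_divisors, Finset.mem_filter, Finset.mem_Icc]
  constructor
  · rintro ⟨h1, h2, h3⟩
    have hd0 : d ≠ 0 := by rintro rfl; exact h3 (Nat.zero_dvd.mp h2)
    exact ⟨⟨by omega, Nat.le_of_dvd hm h2⟩, h2⟩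
  · rintro ⟨⟨h1, h2⟩, h3⟩
    exact ⟨by omega, h3, hm.ne'⟩

lemma cyclo_prime {d : ℕ} (hd : 0 < d) : Prime (cyclotomic d ℤ) :=
  (cyclotomic.irreducible hd).prime

lemma prod_cyclo_dvd {s : Finset ℕ} (hs : ∀ d ∈ s, 0 < d) {x : Polynomial ℤ}
    (hx : ∀ d ∈ s, cyclotomic d ℤ ∣ x) : (∏ d ∈ s, cyclotomic d ℤ) ∣ x := by
  classical
  induction s using Finset.induction_on generalizing x with
  | empty => simpa using one_dvd x
  | insert a t ha ih =>
    obtain ⟨y, rfl⟩ := hx a (Finset.mem_insert_self a t)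
    rw [Finset.prod_insert ha]
    refine mul_dvd_mul_left _ (ih (fun d hd => hs d (Finset.mem_insert_of_mem hd)) ?_)
    intro d hd
    have hp := cyclo_prime (hs d (Finset.mem_insert_of_mem hd))
    rcases hp.dvd_mul.mp (hx d (Finset.mem_insert_of_mem hd)) with h | h
    · exfalso
      have hassoc := (cyclo_prime (hs d (Finset.mem_insert_of_mem hd))).irreducible.associated_of_dvd
        (cyclo_prime (hs a (Finset.mem_insert_self a t))).irreducible h
      have heq := Polynomial.eq_of_monic_of_associated (cyclotomic.monic d ℤ)
        (cyclotomic.monic a ℤ) hassoc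
      have hda : d = a := cyclotomic_injective heq
      exact ha (hda ▸ hd)
    · exact h

lemma qFact_eq_prod (m : ℕ) :
    qFact m = ∏ d ∈ Finset.Icc 2 m, cyclotomic d ℤ ^ (m / d) := by
  induction m with
  | zero => simp [qFact]
  | succ m ih =>
    rw [qFact, Finset.prod_range_succ, ← qFact, ih, qInt_eq_prod (Nat.succ_pos m)]
    have h1 : ∀ d ∈ Finset.Icc 2 (m+1), cyclotomic d ℤ ^ ((m+1)/d)
        = cyclotomic d ℤ ^ (m/d) * (if d ∣ m+1 then cyclotomic d ℤ else 1) := by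
      intro d _
      rw [Nat.succ_div, pow_add]
      congr 1
      split <;> simp
    rw [Finset.prod_congr rfl h1, Finset.prod_mul_distrib]
    congr 1
    · apply Finset.prod_subset (Finset.Icc_subset_Icc_right (Nat.le_succ m))
      intro d hd hd'
      have hdm : d = m + 1 := by
        simp only [Finset.mem_Icc] at hd hd'; omega
      subst hdm
      simp [Nat.div_eq_of_lt (Nat.lt_succ_self m)]
    · exact Finset.prod_filter _ _

lemma div_add_div_carry {d k j : ℕ} (hd : 0 < d) :
    (k + j) / d = k / d + j / d + (if d ≤ k % d + j % d then 1 else 0) := by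
  conv_lhs => rw [← Nat.div_add_mod k d, ← Nat.div_add_mod j d]
  have h : d * (k/d) + k%d + (d * (j/d) + j%d) = d * (k/d + j/d) + (k%d + j%d) := by ring
  rw [h, Nat.mul_add_div hd]
  have hk := Nat.mod_lt k hd
  have hj := Nat.mod_lt j hd
  rcases le_or_gt d (k%d + j%d) with h2 | h2
  · rw [if_pos h2]
    have h3 : (k%d + j%d)/d = 1 := by
      apply Nat.div_eq_of_lt_le <;> omega
    omega
  · rw [if_neg (not_le.mpr h2), Nat.div_eq_of_lt h2]

lemma qFact_eq_prod' {m n : ℕ} (h : m ≤ n) :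
    qFact m = ∏ d ∈ Finset.Icc 2 n, cyclotomic d ℤ ^ (m / d) := by
  rw [qFact_eq_prod]
  apply Finset.prod_subset (Finset.Icc_subset_Icc_right h)
  intro d hd hd'
  simp only [Finset.mem_Icc] at hd hd'
  rw [Nat.div_eq_of_lt (by omega), pow_zero]

lemma B_eq {n : ℕ} {B : ℕ → Polynomial ℤ}
    (hB : ∀ k ≤ n, B k * (qFact k * qFact (n - k)) = qFact n) {k : ℕ} (hk : k ≤ n) :
    B k = ∏ d ∈ (Finset.Icc 2 n).filter (fun d => d ≤ k % d + (n - k) % d),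
      cyclotomic d ℤ := by
  have key := hB k hk
  rw [qFact_eq_prod' hk, qFact_eq_prod' (Nat.sub_le n k), ← Finset.prod_mul_distrib,
    qFact_eq_prod] at key
  have h2 : ∀ d ∈ Finset.Icc 2 n, cyclotomic d ℤ ^ (n / d)
      = (if d ≤ k % d + (n - k) % d then cyclotomic d ℤ else 1)
        * (cyclotomic d ℤ ^ (k / d) * cyclotomic d ℤ ^ ((n - k) / d)) := by
    intro d hd
    simp only [Finset.mem_Icc] at hd
    have hd0 : 0 < d := by omega
    have hn : n = k + (n - k) := by omega
    have hdc := div_add_div_carry (d := d) (k := k) (j := n - k) hd0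
    rw [← hn] at hdc
    rw [hdc, pow_add, pow_add, mul_comm]
    congr 1
    split <;> simp
  rw [Finset.prod_congr rfl h2] at key
  rw [show (∏ d ∈ Finset.Icc 2 n, ((if d ≤ k % d + (n - k) % d then cyclotomic d ℤ else 1)
        * (cyclotomic d ℤ ^ (k / d) * cyclotomic d ℤ ^ ((n - k) / d))))
      = (∏ d ∈ Finset.Icc 2 n, (if d ≤ k % d + (n - k) % d then cyclotomic d ℤ else 1))
        * ∏ d ∈ Finset.Icc 2 n, (cyclotomic d ℤ ^ (k / d) * cyclotomic d ℤ ^ ((n - k) / d))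
      from Finset.prod_mul_distrib] at key
  have hA : (∏ d ∈ Finset.Icc 2 n,
      cyclotomic d ℤ ^ (k / d) * cyclotomic d ℤ ^ ((n - k) / d)) ≠ 0 := by
    apply Finset.prod_ne_zero_iff.mpr
    intro d _
    exact mul_ne_zero (pow_ne_zero _ (cyclotomic_ne_zero d ℤ))
      (pow_ne_zero _ (cyclotomic_ne_zero d ℤ))
  have hkey := mul_right_cancel₀ hA key
  rw [hkey, Finset.prod_filter]

lemma pred_mul {d q : ℕ} (hq : 1 ≤ q) : d * q = d * (q - 1) + d := by
  cases q with
  | zero => omega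
  | succ q' => simp [Nat.mul_succ]

lemma no_carry_of_dvd_succ {n d k : ℕ} (hd : 2 ≤ d) (hdvd : d ∣ n + 1) (hk : k ≤ n) :
    ¬ d ≤ k % d + (n - k) % d := by
  have hd0 : 0 < d := by omega
  obtain ⟨q, hq⟩ := hdvd
  have hq1 : 1 ≤ q := by
    rcases Nat.eq_zero_or_pos q with h | h
    · subst h; simp at hq
    · exact h
  have hmul := pred_mul (d := d) hq1
  have hn : n = d * (q - 1) + (d - 1) := by omega
  have hnmod : n % d = d - 1 := by
    rw [hn, Nat.mul_add_mod, Nat.mod_eq_of_lt (by omega)]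
  have hsum : (k % d + (n - k) % d) % d = d - 1 := by
    rw [← Nat.add_mod, show k + (n - k) = n by omega, hnmod]
  intro hle
  have h1 := Nat.mod_lt k hd0
  have h2 := Nat.mod_lt (n - k) hd0
  have hlt : k % d + (n - k) % d - d < d := by omega
  have : (k % d + (n - k) % d) % d = k % d + (n - k) % d - d := by
    rw [Nat.mod_eq_sub_mod hle, Nat.mod_eq_of_lt hlt]
  omega

lemma carry_exists {n d : ℕ} (hd : 2 ≤ d) (hdn : d ≤ n) (hdvd : ¬ d ∣ n + 1) :
    n % d + 1 ≤ n ∧ d ≤ (n % d + 1) % d + (n - (n % d + 1)) % d := by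
  have hd0 : 0 < d := by omega
  have hr := Nat.mod_lt n hd0
  have hq : d * (n / d) + n % d = n := Nat.div_add_mod n d
  have hq1 : 1 ≤ n / d := (Nat.one_le_div_iff hd0).mpr hdn
  have hmul := pred_mul (d := d) hq1
  have hrne : n % d ≠ d - 1 := by
    intro h
    apply hdvd
    refine ⟨n / d + 1, ?_⟩
    rw [Nat.mul_add]
    omega
  have hk : n % d + 1 < d := by omega
  refine ⟨by omega, ?_⟩
  have h1 : (n % d + 1) % d = n % d + 1 := Nat.mod_eq_of_lt hk
  have h2 : n - (n % d + 1) = d * (n / d - 1) + (d - 1) := by omega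
  rw [h1, h2, Nat.mul_add_mod, Nat.mod_eq_of_lt (show d - 1 < d by omega)]
  omega

lemma assoc_lcm_qInt (n : ℕ) :
    Associated ((Finset.Icc 1 (n+1)).lcm (fun k => qInt k))
      (∏ d ∈ Finset.Icc 2 (n+1), cyclotomic d ℤ) := by
  apply associated_of_dvd_dvd
  · apply Finset.lcm_dvd
    intro k hk
    simp only [Finset.mem_Icc] at hk
    rw [qInt_eq_prod hk.1]
    apply Finset.prod_dvd_prod_of_subset
    intro d hd
    simp only [Finset.mem_filter, Finset.mem_Icc] at hd ⊢
    exact ⟨hd.1.1, le_trans hd.1.2 hk.2⟩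
  · apply prod_cyclo_dvd
    · intro d hd
      simp only [Finset.mem_Icc] at hd
      omega
    · intro d hd
      simp only [Finset.mem_Icc] at hd
      have hdq : cyclotomic d ℤ ∣ qInt d := by
        rw [qInt_eq_prod (show 0 < d by omega)]
        apply Finset.dvd_prod_of_mem
        simp only [Finset.mem_filter, Finset.mem_Icc]
        exact ⟨⟨hd.1, le_refl d⟩, dvd_refl d⟩
      exact dvd_trans hdq (Finset.dvd_lcm (by simp only [Finset.mem_Icc]; omega))

lemma assoc_lcm_B (n : ℕ) {B : ℕ → Polynomial ℤ}
    (hB : ∀ k ≤ n, B k * (qFact k * qFact (n - k)) = qFact n) :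
    Associated ((Finset.range (n+1)).lcm B)
      (∏ d ∈ (Finset.Icc 2 (n+1)).filter (fun d => ¬ d ∣ n + 1), cyclotomic d ℤ) := by
  apply associated_of_dvd_dvd
  · apply Finset.lcm_dvd
    intro k hk
    simp only [Finset.mem_range] at hk
    have hk' : k ≤ n := by omega
    rw [B_eq hB hk']
    apply Finset.prod_dvd_prod_of_subset
    intro d hd
    simp only [Finset.mem_filter, Finset.mem_Icc] at hd ⊢
    refine ⟨⟨hd.1.1, by omega⟩, ?_⟩
    intro hdvd
    exact no_carry_of_dvd_succ hd.1.1 hdvd hk' hd.2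
  · apply prod_cyclo_dvd
    · intro d hd
      simp only [Finset.mem_filter, Finset.mem_Icc] at hd
      omega
    · intro d hd
      simp only [Finset.mem_filter, Finset.mem_Icc] at hd
      have hdn : d ≤ n := by
        by_contra hcon
        exact hd.2 (dvd_of_eq (by omega))
      obtain ⟨hkle, hcarry⟩ := carry_exists hd.1.1 hdn hd.2
      have hdB : cyclotomic d ℤ ∣ B (n % d + 1) := by
        rw [B_eq hB hkle]
        apply Finset.dvd_prod_of_mem
        simp only [Finset.mem_filter, Finset.mem_Icc]
        exact ⟨⟨hd.1.1, hdn⟩, hcarry⟩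
      exact dvd_trans hdB (Finset.dvd_lcm (by simp only [Finset.mem_range]; omega))

/-- For a positive integer `n`, if `B k` is the `q`-binomial coefficient
`[n choose k]_q = [n]_q!/([k]_q! [n-k]_q!)` for each `0 ≤ k ≤ n`, then
`[n+1]_q * lcm(B 0, ..., B n)` is associated to `lcm([1]_q, ..., [n+1]_q)` in `ℤ[q]`. -/
theorem qfarhi (n : ℕ) (hn : 0 < n) (B : ℕ → Polynomial ℤ)
    (hB : ∀ k ≤ n, B k * (qFact k * qFact (n - k)) = qFact n) :
    Associated (qInt (n + 1) * (Finset.range (n + 1)).lcm B)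
      ((Finset.Icc 1 (n + 1)).lcm fun k => qInt k) := by
  refine Associated.trans (Associated.mul_left _ (assoc_lcm_B n hB)) ?_
  rw [qInt_eq_prod (show 0 < n + 1 by omega), Finset.prod_filter_mul_prod_filter_not]
  exact (assoc_lcm_qInt n).symm
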